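/- Let p be a prime, n ≥ 1, and let S = (F_{p^n},+,⋆) be a finite presemifield with spread set C. Let C^t = {φ̄ : φ ∈ C} be the transpose spread set, where φ̄ denotes the adjoint of φ with respect to the trace form ⟨x,y⟩ = Tr_{F_{p^n}/F_p}(xy). Then N_r(C) = {ν̄ : ν ∈ N_m(C^t)} and N_m(C) = {ν̄ : ν ∈ N_r(C^t)}, where for a subset D of End_{F_p}(F_{p^n}) one sets N_r(D) = {μ : μ∘φ ∈ D for all φ ∈ D} and N_m(D) = {μ : φ∘μ ∈ D for all φ ∈ D}. -/

import Mathlib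

/-- A finite presemifield of characteristic `p`: multiplication is additive
(equivalently, `ZMod p`-linear) in each argument and has no zero divisors.
For `y`, `mul.flip y` is the right-multiplication map `φ_y : x ↦ x ⋆ y`. -/
structure Presemifield (p : ℕ) (S : Type*) [AddCommGroup S] [Module (ZMod p) S] where
  mul : S →ₗ[ZMod p] S →ₗ[ZMod p] S
  eq_zero_or_eq_zero : ∀ x y : S, mul x y = 0 → x = 0 ∨ y = 0

/-- The spread set `C = {φ_y : y ∈ S}` of a presemifield. -/
def Presemifield.spread {p : ℕ} {S : Type*} [AddCommGroup S] [Module (ZMod p) S]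
    (M : Presemifield p S) : Set (S →ₗ[ZMod p] S) :=
  Set.range M.mul.flip

/-- The right-nucleus set `N_r(D) = {μ : μ∘φ ∈ D for all φ ∈ D}`. -/
def rightNucleusSet {p : ℕ} {S : Type*} [AddCommGroup S] [Module (ZMod p) S]
    (D : Set (S →ₗ[ZMod p] S)) : Set (S →ₗ[ZMod p] S) :=
  {μ | ∀ φ ∈ D, μ ∘ₗ φ ∈ D}

/-- The middle-nucleus set `N_m(D) = {μ : φ∘μ ∈ D for all φ ∈ D}`. -/
def middleNucleusSet {p : ℕ} {S : Type*} [AddCommGroup S] [Module (ZMod p) S]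
    (D : Set (S →ₗ[ZMod p] S)) : Set (S →ₗ[ZMod p] S) :=
  {μ | ∀ φ ∈ D, φ ∘ₗ μ ∈ D}

theorem statement6 (p n : ℕ) [Fact p.Prime] (hn : n ≠ 0)
    (M : Presemifield p (GaloisField p n))
    (adj : (GaloisField p n →ₗ[ZMod p] GaloisField p n) →
      (GaloisField p n →ₗ[ZMod p] GaloisField p n))
    (hadj : ∀ (φ : GaloisField p n →ₗ[ZMod p] GaloisField p n) (x y : GaloisField p n),
      Algebra.trace (ZMod p) (GaloisField p n) (x * φ y) =
        Algebra.trace (ZMod p) (GaloisField p n) (adj φ x * y)) :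
    rightNucleusSet M.spread = adj '' middleNucleusSet (adj '' M.spread) ∧
    middleNucleusSet M.spread = adj '' rightNucleusSet (adj '' M.spread) := by
  set F := GaloisField p n
  set T := Algebra.trace (ZMod p) F with hT
  -- maps agreeing against the trace form are equal
  have key : ∀ a b : F →ₗ[ZMod p] F, (∀ x y, T (a x * y) = T (b x * y)) → a = b := by
    intro a b h
    ext x
    have : a x - b x = 0 := by
      apply (traceForm_nondegenerate (ZMod p) F).1
      intro y
      simp only [LinearMap.sub_apply, Algebra.traceForm_apply, ← hT]
      rw [sub_mul, map_sub, h x y, sub_self]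
    exact sub_eq_zero.mp this
  -- symmetry of the form
  have comm : ∀ x y : F, T (x * y) = T (y * x) := fun x y => by rw [mul_comm]
  -- adjoint is involutive
  have adj_adj : ∀ φ, adj (adj φ) = φ := by
    intro φ
    apply key
    intro x y
    rw [← hadj (adj φ) x y, comm x (adj φ y), ← hadj φ y x, comm y (φ x)]
  -- adjoint is antimultiplicative
  have adj_comp : ∀ μ φ, adj (μ ∘ₗ φ) = adj φ ∘ₗ adj μ := by
    intro μ φ
    apply key
    intro x y
    rw [← hadj (μ ∘ₗ φ) x y]
    show T (x * μ (φ y)) = T (adj φ (adj μ x) * y)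
    rw [hadj μ x (φ y), hadj φ (adj μ x) y]
  have adj_inj : Function.Injective adj := by
    intro a b h
    rw [← adj_adj a, h, adj_adj]
  constructor
  · ext μ
    constructor
    · intro hμ
      refine ⟨adj μ, ?_, (adj_adj μ)⟩
      rintro ψ ⟨φ, hφ, rfl⟩
      exact ⟨μ ∘ₗ φ, hμ φ hφ, adj_comp μ φ⟩
    · rintro ⟨ν, hν, rfl⟩
      intro φ hφ
      obtain ⟨ψ, hψ, hψ2⟩ := hν (adj φ) ⟨φ, hφ, rfl⟩
      have : adj ν ∘ₗ φ = ψ := by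
        rw [← adj_adj ψ, hψ2, adj_comp, adj_adj]
      rwa [this]
  · ext μ
    constructor
    · intro hμ
      refine ⟨adj μ, ?_, (adj_adj μ)⟩
      rintro ψ ⟨φ, hφ, rfl⟩
      exact ⟨φ ∘ₗ μ, hμ φ hφ, adj_comp φ μ⟩
    · rintro ⟨ν, hν, rfl⟩
      intro φ hφ
      obtain ⟨ψ, hψ, hψ2⟩ := hν (adj φ) ⟨φ, hφ, rfl⟩
      have : φ ∘ₗ adj ν = ψ := by
        rw [← adj_adj ψ, hψ2, adj_comp, adj_adj]
      rwa [this]
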